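/- A function f : X → ℝ on a box X ⊆ ℝⁿ satisfies the DR property (for all a ≤ b in X, all i, all k ≥ 0 with a + k·eᵢ, b + k·eᵢ ∈ X: f(a + k·eᵢ) − f(a) ≥ f(b + k·eᵢ) − f(b)) if and only if f is submodular and coordinate-wise concave (for all x ∈ X, i, k, l ≥ 0 with the relevant points in X: f(x + k·eᵢ) − f(x) ≥ f(x + (k+l)·eᵢ) − f(x + l·eᵢ)). -/

import Mathlib

/-- `f` is submodular on `X`. -/
def SubmodularOn {n : ℕ} (f : (Fin n → ℝ) → ℝ) (X : Set (Fin n → ℝ)) : Prop :=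
  ∀ x ∈ X, ∀ y ∈ X, f x + f y ≥ f (x ⊔ y) + f (x ⊓ y)

/-- The diminishing returns (DR) property of `f` on `X`. -/
def DROn {n : ℕ} (f : (Fin n → ℝ) → ℝ) (X : Set (Fin n → ℝ)) : Prop :=
  ∀ a ∈ X, ∀ b ∈ X, a ≤ b → ∀ i : Fin n, ∀ k : ℝ, 0 ≤ k →
    a + k • (Pi.single i 1 : Fin n → ℝ) ∈ X → b + k • (Pi.single i 1 : Fin n → ℝ) ∈ X →
    f (a + k • (Pi.single i 1 : Fin n → ℝ)) - f a ≥
      f (b + k • (Pi.single i 1 : Fin n → ℝ)) - f b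

/-- `f` is coordinate-wise concave on `X`. -/
def CoordinatewiseConcaveOn {n : ℕ} (f : (Fin n → ℝ) → ℝ) (X : Set (Fin n → ℝ)) : Prop :=
  ∀ x ∈ X, ∀ i : Fin n, ∀ k l : ℝ, 0 ≤ k → 0 ≤ l →
    x + k • (Pi.single i 1 : Fin n → ℝ) ∈ X → x + l • (Pi.single i 1 : Fin n → ℝ) ∈ X →
    x + (k + l) • (Pi.single i 1 : Fin n → ℝ) ∈ X →
    f (x + k • (Pi.single i 1 : Fin n → ℝ)) - f x ≥
      f (x + (k + l) • (Pi.single i 1 : Fin n → ℝ)) - f (x + l • (Pi.single i 1 : Fin n → ℝ))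

lemma smul_single_nonneg' {n : ℕ} {k : ℝ} (hk : 0 ≤ k) (i : Fin n) :
    (0 : Fin n → ℝ) ≤ k • (Pi.single i 1 : Fin n → ℝ) := by
  intro j
  by_cases h : j = i <;> simp [Pi.single_apply, h, hk]

lemma smul_single_apply' {n : ℕ} (k : ℝ) (i j : Fin n) :
    (k • (Pi.single i 1 : Fin n → ℝ)) j = if j = i then k else 0 := by
  by_cases h : j = i <;> simp [Pi.single_apply, h]

lemma dr_aux {n : ℕ} {u v : Fin n → ℝ} {f : (Fin n → ℝ) → ℝ}
    (hf : DROn f (Set.Icc u v)) (s : Finset (Fin n)) :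
    ∀ c : Fin n → ℝ, 0 ≤ c → (∀ j ∉ s, c j = 0) →
    ∀ a b : Fin n → ℝ, a ∈ Set.Icc u v → b ∈ Set.Icc u v → a ≤ b →
    a + c ∈ Set.Icc u v → b + c ∈ Set.Icc u v →
    f (a + c) - f a ≥ f (b + c) - f b := by
  induction s using Finset.induction_on with
  | empty =>
    intro c _ hc0 a b _ _ _ _ _
    have hc : c = 0 := funext fun j => hc0 j (by simp)
    subst hc; simp
  | @insert i s hi ih =>
    intro c hc hc0 a b ha hb hab hac hbc
    set c' : Fin n → ℝ := Function.update c i 0 with hc'def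
    have hc' : (0 : Fin n → ℝ) ≤ c' := by
      intro j
      by_cases h : j = i
      · simp [hc'def, Function.update_apply, h]
      · simpa [hc'def, Function.update_apply, h] using hc j
    have hc'0 : ∀ j ∉ s, c' j = 0 := by
      intro j hj
      by_cases h : j = i
      · simp [hc'def, h]
      · simpa [hc'def, Function.update_apply, h] using hc0 j (by simp [h, hj])
    have hcc' : c = c' + (c i) • (Pi.single i 1 : Fin n → ℝ) := by
      funext j
      by_cases h : j = i <;>
        simp [hc'def, Function.update_apply, h, smul_single_apply']
    have hc'le : c' ≤ c := by
      intro j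
      by_cases h : j = i <;> simp [hc'def, Function.update_apply, h]
      exact hc i
    have hac' : a + c' ∈ Set.Icc u v :=
      ⟨le_trans ha.1 (le_add_of_nonneg_right hc'),
       le_trans (add_le_add le_rfl hc'le) hac.2⟩
    have hbc' : b + c' ∈ Set.Icc u v :=
      ⟨le_trans hb.1 (le_add_of_nonneg_right hc'),
       le_trans (add_le_add le_rfl hc'le) hbc.2⟩
    have hac'' : a + c' + (c i) • (Pi.single i 1 : Fin n → ℝ) ∈ Set.Icc u v := by
      rw [add_assoc, ← hcc']; exact hac
    have hbc'' : b + c' + (c i) • (Pi.single i 1 : Fin n → ℝ) ∈ Set.Icc u v := by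
      rw [add_assoc, ← hcc']; exact hbc
    have step := hf (a + c') hac' (b + c') hbc' (add_le_add hab le_rfl)
      i (c i) (hc i) hac'' hbc''
    rw [add_assoc, ← hcc', add_assoc, ← hcc'] at step
    have ihstep := ih c' hc' hc'0 a b ha hb hab hac' hbc'
    linarith

/-- A function on a box satisfies the DR property iff it is submodular and
coordinate-wise concave. -/
theorem dr_iff_submodular_and_coordinatewiseConcave {n : ℕ} (u v : Fin n → ℝ) (huv : u ≤ v)
    (f : (Fin n → ℝ) → ℝ) :
    DROn f (Set.Icc u v) ↔
      SubmodularOn f (Set.Icc u v) ∧ CoordinatewiseConcaveOn f (Set.Icc u v) := by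
  constructor
  · intro hf
    constructor
    · -- submodular
      intro x hx y hy
      have hinf : x ⊓ y ∈ Set.Icc u v := ⟨le_inf hx.1 hy.1, le_trans inf_le_left hx.2⟩
      set c : Fin n → ℝ := x - x ⊓ y with hcdef
      have hc : (0 : Fin n → ℝ) ≤ c := by
        intro j
        have : (x ⊓ y) j ≤ x j := inf_le_left
        simpa [hcdef] using this
      have hxc : x ⊓ y + c = x := by simp [hcdef]
      have hyc : y + c = x ⊔ y := by
        funext j
        simp only [hcdef, Pi.add_apply, Pi.sub_apply, Pi.inf_apply, Pi.sup_apply]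
        linarith [min_add_max (x j) (y j)]
      have hsup : x ⊔ y ∈ Set.Icc u v := ⟨le_trans hx.1 le_sup_left, sup_le hx.2 hy.2⟩
      have := dr_aux hf Finset.univ c hc (by simp) (x ⊓ y) y hinf hy inf_le_right
        (by rw [hxc]; exact hx) (by rw [hyc]; exact hsup)
      rw [hxc, hyc] at this
      linarith
    · -- concave
      intro x hx i k l hk hl hxk hxl hxkl
      have h1 : x ≤ x + l • (Pi.single i 1 : Fin n → ℝ) :=
        le_add_of_nonneg_right (smul_single_nonneg' hl i)
      have heq : x + l • (Pi.single i 1 : Fin n → ℝ) + k • (Pi.single i 1 : Fin n → ℝ)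
          = x + (k + l) • (Pi.single i 1 : Fin n → ℝ) := by
        rw [add_smul]; abel
      have := hf x hx (x + l • (Pi.single i 1 : Fin n → ℝ)) hxl h1 i k hk hxk
        (by rw [heq]; exact hxkl)
      rw [heq] at this
      exact this
  · rintro ⟨hsub, hconc⟩
    intro a ha b hb hab i k hk hak hbk
    set e : Fin n → ℝ := Pi.single i 1 with hedef
    set l : ℝ := b i - a i with hldef
    have hl : 0 ≤ l := by rw [hldef]; linarith [hab i]
    have hal : a + l • e ∈ Set.Icc u v := by
      constructor
      · exact le_trans ha.1 (le_add_of_nonneg_right (smul_single_nonneg' hl i))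
      · intro j
        rw [Pi.add_apply, hedef, smul_single_apply']
        by_cases h : j = i
        · subst h
          rw [if_pos rfl, hldef]
          have := hb.2 j
          linarith
        · rw [if_neg h, add_zero]; exact ha.2 j
    have hakl : a + (k + l) • e ∈ Set.Icc u v := by
      constructor
      · exact le_trans ha.1 (le_add_of_nonneg_right (smul_single_nonneg' (by linarith) i))
      · intro j
        rw [Pi.add_apply, hedef, smul_single_apply']
        by_cases h : j = i
        · subst h
          rw [if_pos rfl, hldef]
          have := hbk.2 j
          rw [Pi.add_apply, hedef, smul_single_apply', if_pos rfl] at this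
          linarith
        · rw [if_neg h, add_zero]; exact ha.2 j
    -- submodularity with x = a + (k+l)•e, y = b
    have hsupeq : (a + (k + l) • e) ⊔ b = b + k • e := by
      funext j
      rw [Pi.sup_apply, Pi.add_apply, Pi.add_apply, hedef, smul_single_apply',
        smul_single_apply']
      by_cases h : j = i
      · subst h
        rw [if_pos rfl, if_pos rfl, hldef]
        have h2 : a j + (k + (b j - a j)) = b j + k := by ring
        rw [h2, sup_of_le_left (by linarith)]
      · rw [if_neg h, if_neg h, add_zero, add_zero]
        exact sup_eq_right.mpr (hab j)
    have hinfeq : (a + (k + l) • e) ⊓ b = a + l • e := by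
      funext j
      rw [Pi.inf_apply, Pi.add_apply, Pi.add_apply, hedef, smul_single_apply',
        smul_single_apply']
      by_cases h : j = i
      · subst h
        rw [if_pos rfl, if_pos rfl, hldef]
        have h2 : a j + (k + (b j - a j)) = b j + k := by ring
        rw [h2, inf_of_le_right (by linarith)]
        ring
      · rw [if_neg h, if_neg h]
        simpa using inf_eq_left.mpr (hab j)
    have hsubstep := hsub (a + (k + l) • e) hakl b hb
    rw [hsupeq, hinfeq] at hsubstep
    have hconcstep := hconc a ha i k l hk hl hak hal hakl
    linarith
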